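/- arXiv:2007.14801 — 3 statements merged into one kernel-verified Lean document; each statement's English description precedes it below -/
import Mathlib

section
/- For j ∈ {0,1,2} let E_j = {n | range(φₙ) ⊆ {0,1,2} and (Wₙ is finite or {k ∈ Wₙ | φₙ(k) = j} is finite)}. Then the 3-tuple (E₀, E₁, E₂) is m-complete in the class of 3-tuples of Σ⁰₂ subsets of ℕ: each E_j is Σ⁰₂, and every 3-tuple of Σ⁰₂ subsets of ℕ is ≤_m-reducible to (E₀, E₁, E₂). -/
/-- The standard numbering of the partial computable functions. -/
def phi (e : ℕ) : ℕ →. ℕ := (Denumerable.ofNat Nat.Partrec.Code e).eval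

/-- `W_e`, the domain of `φ_e`. -/
def Wset (e : ℕ) : Set ℕ := {x : ℕ | (phi e x).Dom}

/-- A set `S ⊆ ℕ` is `Σ⁰₂` if `S = {n | ∃ a, ∀ b, R(n,a,b)}` for a computable relation `R`. -/
def Sigma02 (S : Set ℕ) : Prop :=
  ∃ R : ℕ × ℕ × ℕ → Bool, Computable R ∧ S = {n : ℕ | ∃ a : ℕ, ∀ b : ℕ, R (n, a, b) = true}

/-- m-reducibility of `s`-tuples of subsets of `ℕ`. -/
def TupleMRed {s : ℕ} (X A : Fin s → Set ℕ) : Prop :=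
  ∃ h : ℕ → ℕ, Computable h ∧ ∀ (i : Fin s) (n : ℕ), n ∈ X i ↔ h n ∈ A i

/-- m-reducibility of an `s`-tuple of functions `F_i : ℕ^s → ℕ` to an `s`-tuple of
subsets of `ℕ`: there are computable `h, a_i, b_i` with `F_i(x̄) = a_i(x̄)` when
`h(x̄) ∈ A_i` and `F_i(x̄) = b_i(x̄)` when `h(x̄) ∉ A_i`. -/
def FunTupleMRed {s : ℕ} (F : Fin s → (Fin s → ℕ) → ℕ) (A : Fin s → Set ℕ) : Prop :=
  ∃ (h : (Fin s → ℕ) → ℕ) (a b : Fin s → (Fin s → ℕ) → ℕ),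
    Computable h ∧ (∀ i : Fin s, Computable (a i)) ∧ (∀ i : Fin s, Computable (b i)) ∧
    ∀ (x : Fin s → ℕ) (i : Fin s),
      (h x ∈ A i → F i x = a i x) ∧ (h x ∉ A i → F i x = b i x)

/-- `E_j = {n | range(φₙ) ⊆ {0,1,2} and (Wₙ is finite or {k ∈ Wₙ | φₙ(k) = j} is finite)}`. -/
def Eset (j : ℕ) : Set ℕ :=
  {n : ℕ | (∀ x m : ℕ, m ∈ phi n x → m ∈ ({0, 1, 2} : Set ℕ)) ∧
    ((Wset n).Finite ∨ {k : ℕ | j ∈ phi n k}.Finite)}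

set_option maxHeartbeats 1000000

namespace EsetProof

open Nat.Partrec (Code)
open Nat.Partrec.Code

/-- The evaln application used in the Σ⁰₂ description of `Eset`. -/
def ev (q : ℕ × ℕ × ℕ) : Option ℕ :=
  evaln q.2.2.unpair.1 (Denumerable.ofNat Code q.1) q.2.2.unpair.2

theorem ev_primrec : Primrec ev :=
  primrec_evaln.comp <|
    Primrec.pair
      (Primrec.pair ((Primrec.fst.comp Primrec.unpair).comp (Primrec.snd.comp Primrec.snd))
        ((Primrec.ofNat Code).comp Primrec.fst))
      ((Primrec.snd.comp Primrec.unpair).comp (Primrec.snd.comp Primrec.snd))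

/-- The Σ⁰₂ matrix for `Eset j`. -/
def Erel (j : ℕ) (q : ℕ × ℕ × ℕ) : Bool :=
  decide ((ev q).getD 0 ≤ 2 ∧
    ((q.2.1.unpair.1 = 0 ∧ (q.2.2.unpair.2 ≤ q.2.1.unpair.2 ∨ ev q = none)) ∨
     (¬ q.2.1.unpair.1 = 0 ∧ (q.2.2.unpair.2 ≤ q.2.1.unpair.2 ∨ ¬ ev q = some j))))

theorem Erel_computable (j : ℕ) : Computable (Erel j) := by
  have h1 : PrimrecPred fun q : ℕ × ℕ × ℕ => (ev q).getD 0 ≤ 2 :=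
    Primrec.nat_le.comp (Primrec.option_getD.comp ev_primrec (Primrec.const 0))
      (Primrec.const 2)
  have hc0 : PrimrecPred fun q : ℕ × ℕ × ℕ => q.2.1.unpair.1 = 0 :=
    Primrec.eq.comp ((Primrec.fst.comp Primrec.unpair).comp (Primrec.fst.comp Primrec.snd))
      (Primrec.const 0)
  have hxd : PrimrecPred fun q : ℕ × ℕ × ℕ => q.2.2.unpair.2 ≤ q.2.1.unpair.2 :=
    Primrec.nat_le.comp ((Primrec.snd.comp Primrec.unpair).comp (Primrec.snd.comp Primrec.snd))
      ((Primrec.snd.comp Primrec.unpair).comp (Primrec.fst.comp Primrec.snd))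
  have hnone : PrimrecPred fun q : ℕ × ℕ × ℕ => ev q = none :=
    Primrec.eq.comp ev_primrec (Primrec.const none)
  have hsome : PrimrecPred fun q : ℕ × ℕ × ℕ => ¬ ev q = some j :=
    (Primrec.eq.comp ev_primrec (Primrec.const (some j))).not
  have : PrimrecPred fun q : ℕ × ℕ × ℕ => ((ev q).getD 0 ≤ 2 ∧
      ((q.2.1.unpair.1 = 0 ∧ (q.2.2.unpair.2 ≤ q.2.1.unpair.2 ∨ ev q = none)) ∨
       (¬ q.2.1.unpair.1 = 0 ∧ (q.2.2.unpair.2 ≤ q.2.1.unpair.2 ∨ ¬ ev q = some j)))) :=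
    h1.and ((hc0.and (hxd.or hnone)).or (hc0.not.and (hxd.or hsome)))
  have := this.decide.to_comp
  exact this

theorem Eset_eq (j : ℕ) :
    Eset j = {n : ℕ | ∃ a : ℕ, ∀ b : ℕ, Erel j (n, a, b) = true} := by
  ext n
  simp only [Eset, Set.mem_setOf_eq, Erel, decide_eq_true_iff]
  constructor
  · rintro ⟨hr, hfin⟩
    have hr' : ∀ b : ℕ, (ev (n, 0, b)).getD 0 ≤ 2 ∧ ∀ a, ev (n, a, b) = ev (n, 0, b) := by
      intro b
      constructor
      · cases ho : ev (n, 0, b) with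
        | none => simp
        | some m =>
          have hm : m ∈ phi n b.unpair.2 := evaln_sound ho
          have := hr _ _ hm
          simp only [Set.mem_insert_iff, Set.mem_singleton_iff] at this
          simp; omega
      · intro a; rfl
    rcases hfin with hW | hJ
    · obtain ⟨d, hd⟩ := hW.bddAbove
      refine ⟨Nat.pair 0 d, fun b => ?_⟩
      refine ⟨(hr' b).1, Or.inl ⟨by simp, ?_⟩⟩
      by_cases hx : b.unpair.2 ≤ d
      · left; simpa using hx
      · right
        cases ho : ev (n, Nat.pair 0 d, b) with
        | none => rfl
        | some m =>
          exact absurd (hd (show b.unpair.2 ∈ Wset n from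
            Part.dom_iff_mem.2 ⟨m, evaln_sound ho⟩)) hx
    · obtain ⟨d, hd⟩ := hJ.bddAbove
      refine ⟨Nat.pair 1 d, fun b => ?_⟩
      refine ⟨(hr' b).1, Or.inr ⟨by simp, ?_⟩⟩
      by_cases hx : b.unpair.2 ≤ d
      · left; simpa using hx
      · right
        intro ho
        exact absurd (hd (show b.unpair.2 ∈ {k : ℕ | j ∈ phi n k} from evaln_sound ho)) hx
  · rintro ⟨a, ha⟩
    constructor
    · intro x m hm
      obtain ⟨s, hs⟩ := evaln_complete.1 hm
      have := (ha (Nat.pair s x)).1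
      rw [show ev (n, a, Nat.pair s x) = some m by simpa [ev] using hs] at this
      simp only [Option.getD_some] at this
      simp only [Set.mem_insert_iff, Set.mem_singleton_iff]; omega
    · by_cases h0 : a.unpair.1 = 0
      · left
        apply Set.Finite.subset (Set.finite_Iic a.unpair.2)
        intro k hk
        obtain ⟨m, hm⟩ := Part.dom_iff_mem.1 hk
        obtain ⟨s, hs⟩ := evaln_complete.1 hm
        rcases (ha (Nat.pair s k)).2 with ⟨-, h⟩ | ⟨h', -⟩
        · rcases h with h | h
          · simpa using h
          · rw [show ev (n, a, Nat.pair s k) = some m by simpa [ev] using hs] at h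
            simp at h
        · exact absurd h0 h'
      · right
        apply Set.Finite.subset (Set.finite_Iic a.unpair.2)
        intro k hk
        obtain ⟨s, hs⟩ := evaln_complete.1 hk
        rcases (ha (Nat.pair s k)).2 with ⟨h', -⟩ | ⟨-, h⟩
        · exact absurd h' h0
        · rcases h with h | h
          · simpa using h
          · exact absurd (show ev (n, a, Nat.pair s k) = some j by simpa [ev] using hs) h


/-- `chk R n a s = true` iff `R (n,a,b)` for all `b < s`. -/
def chk (R : ℕ × ℕ × ℕ → Bool) (n a : ℕ) : ℕ → Bool
  | 0 => true
  | s + 1 => chk R n a s && R (n, a, s)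

theorem chk_iff (R : ℕ × ℕ × ℕ → Bool) (n a s : ℕ) :
    chk R n a s = true ↔ ∀ b < s, R (n, a, b) = true := by
  induction s with
  | zero => simp [chk]
  | succ s ih =>
    simp only [chk, Bool.and_eq_true, ih]
    constructor
    · rintro ⟨h1, h2⟩ b hb
      rcases Nat.lt_succ_iff_lt_or_eq.1 hb with h | rfl
      exacts [h1 b h, h2]
    · intro h
      exact ⟨fun b hb => h b (hb.trans (Nat.lt_succ_self s)), h s (Nat.lt_succ_self s)⟩

/-- Least `a < s` with `p a = true`, and `s` if there is none. -/
def searchUpTo (p : ℕ → Bool) : ℕ → ℕ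
  | 0 => 0
  | s + 1 =>
    if searchUpTo p s < s then searchUpTo p s else if p s then s else s + 1

theorem searchUpTo_spec (p : ℕ → Bool) (s : ℕ) :
    (∀ i < searchUpTo p s, p i = false) ∧ searchUpTo p s ≤ s ∧
      (searchUpTo p s < s → p (searchUpTo p s) = true) := by
  induction s with
  | zero => exact ⟨fun i hi => absurd hi (by simp [searchUpTo]), by simp [searchUpTo]⟩
  | succ s ih =>
    obtain ⟨h1, h2, h3⟩ := ih
    by_cases hlt : searchUpTo p s < s
    · simp only [searchUpTo, if_pos hlt]
      exact ⟨h1, by omega, fun _ => h3 hlt⟩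
    · have heq : searchUpTo p s = s := le_antisymm h2 (not_lt.1 hlt)
      by_cases hp : p s = true
      · simp only [searchUpTo, if_neg hlt, if_pos hp]
        exact ⟨fun i hi => h1 i (by omega), by omega, fun _ => hp⟩
      · simp only [searchUpTo, if_neg hlt, if_neg hp]
        refine ⟨fun i hi => ?_, le_refl _, by omega⟩
        rcases Nat.lt_succ_iff_lt_or_eq.1 hi with h | rfl
        · exact h1 i (by omega)
        · exact Bool.not_eq_true _ ▸ hp

/-- Approximation to the least `Σ⁰₂` witness. -/
def stage (R : ℕ × ℕ × ℕ → Bool) (n s : ℕ) : ℕ :=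
  searchUpTo (fun a => chk R n a s) s

theorem stage_le (R : ℕ × ℕ × ℕ → Bool) (n s : ℕ) : stage R n s ≤ s :=
  (searchUpTo_spec _ s).2.1

theorem stage_le_of (R : ℕ × ℕ × ℕ → Bool) {n a₀ : ℕ}
    (h : ∀ b, R (n, a₀, b) = true) (s : ℕ) : stage R n s ≤ a₀ := by
  rcases le_or_gt s a₀ with hs | hs
  · exact (stage_le R n s).trans hs
  · by_contra hc
    push_neg at hc
    have hfalse := (searchUpTo_spec (fun a => chk R n a s) s).1 a₀ hc
    have htrue : chk R n a₀ s = true := (chk_iff R n a₀ s).2 fun b _ => h b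
    simp [htrue] at hfalse

theorem stage_unbounded (R : ℕ × ℕ × ℕ → Bool) {n : ℕ}
    (h : ∀ a, ∃ b, R (n, a, b) = false) (T : ℕ) : ∃ s, T < stage R n s := by
  choose b hb using h
  classical
  refine ⟨max (T + 1) ((Finset.range (T + 1)).sup fun a => b a + 1), ?_⟩
  set s := max (T + 1) ((Finset.range (T + 1)).sup fun a => b a + 1) with hsdef
  by_contra hc
  push_neg at hc
  have hlt : stage R n s < s := lt_of_le_of_lt hc (by omega)
  have hp := (searchUpTo_spec (fun a => chk R n a s) s).2.2 hlt
  have hdef : searchUpTo (fun a => chk R n a s) s = stage R n s := rfl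
  rw [hdef, chk_iff] at hp
  have hbs : b (stage R n s) < s := by
    have h1 : b (stage R n s) + 1 ≤ (Finset.range (T + 1)).sup fun a => b a + 1 :=
      Finset.le_sup (f := fun a => b a + 1) (Finset.mem_range.2 (Nat.lt_succ_of_le hc))
    have h2 : ((Finset.range (T + 1)).sup fun a => b a + 1) ≤ s := le_max_right _ _
    omega
  have := hp _ hbs
  rw [hb (stage R n s)] at this
  exact Bool.false_ne_true this

theorem chk_computable {R : ℕ × ℕ × ℕ → Bool} (hR : Computable R) :
    Computable fun q : (ℕ × ℕ) × ℕ => chk R q.1.1 q.1.2 q.2 := by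
  have harg : Computable fun x : ((ℕ × ℕ) × ℕ) × ℕ × Bool => (x.1.1.1, x.1.1.2, x.2.1) :=
    Computable.pair ((Computable.fst.comp Computable.fst).comp Computable.fst)
      (Computable.pair ((Computable.snd.comp Computable.fst).comp Computable.fst)
        (Computable.fst.comp Computable.snd))
  have hR' : Computable fun x : ((ℕ × ℕ) × ℕ) × ℕ × Bool => R (x.1.1.1, x.1.1.2, x.2.1) :=
    hR.comp harg
  have hh : Computable₂ fun (q : (ℕ × ℕ) × ℕ) (p : ℕ × Bool) =>
      cond p.2 (R (q.1.1, q.1.2, p.1)) false :=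
    Computable.cond (Computable.snd.comp Computable.snd) hR' (Computable.const false)
  have := Computable.nat_rec (f := fun q : (ℕ × ℕ) × ℕ => q.2)
    (g := fun _ : (ℕ × ℕ) × ℕ => true) Computable.snd (Computable.const true) hh
  refine this.of_eq fun q => ?_
  obtain ⟨⟨n, a⟩, s⟩ := q
  show (Nat.rec true (fun y IH => bif IH then R (n, a, y) else false) s : Bool) = chk R n a s
  induction s with
  | zero => rfl
  | succ s ih =>
    show (bif (Nat.rec true (fun y IH => bif IH then R (n, a, y) else false) s : Bool)
        then R (n, a, s) else false) = chk R n a (s + 1)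
    rw [ih]
    simp only [chk]
    cases chk R n a s <;> simp

theorem stage_computable {R : ℕ × ℕ × ℕ → Bool} (hR : Computable R) :
    Computable fun q : ℕ × ℕ => stage R q.1 q.2 := by
  have hchk := chk_computable hR
  have c1 : Computable fun x : (ℕ × ℕ) × ℕ × ℕ => decide (x.2.2 < x.2.1) :=
    (Primrec.nat_lt.comp (Primrec.snd.comp Primrec.snd) (Primrec.fst.comp Primrec.snd)).decide.to_comp
  have t1 : Computable fun x : (ℕ × ℕ) × ℕ × ℕ => x.2.2 :=
    Computable.snd.comp Computable.snd
  have targ : Computable fun x : (ℕ × ℕ) × ℕ × ℕ => ((x.1.1, x.2.1), x.1.2) :=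
    Computable.pair (Computable.pair (Computable.fst.comp Computable.fst)
      (Computable.fst.comp Computable.snd)) (Computable.snd.comp Computable.fst)
  have t2 : Computable fun x : (ℕ × ℕ) × ℕ × ℕ => chk R x.1.1 x.2.1 x.1.2 :=
    Computable.comp (f := fun q : (ℕ × ℕ) × ℕ => chk R q.1.1 q.1.2 q.2)
      (g := fun x : (ℕ × ℕ) × ℕ × ℕ => ((x.1.1, x.2.1), x.1.2)) hchk targ
  have t3 : Computable fun x : (ℕ × ℕ) × ℕ × ℕ =>
      cond (chk R x.1.1 x.2.1 x.1.2) x.2.1 (x.2.1 + 1) :=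
    Computable.cond t2 (Computable.fst.comp Computable.snd)
      (Computable.succ.comp (Computable.fst.comp Computable.snd))
  have hh : Computable₂ fun (q : ℕ × ℕ) (p : ℕ × ℕ) =>
      cond (decide (p.2 < p.1)) p.2 (cond (chk R q.1 p.1 q.2) p.1 (p.1 + 1)) :=
    Computable.cond c1 t1 t3
  have := Computable.nat_rec (f := fun q : ℕ × ℕ => q.2)
    (g := fun _ : ℕ × ℕ => 0) Computable.snd (Computable.const 0) hh
  refine this.of_eq fun q => ?_
  obtain ⟨n, s⟩ := q
  show (Nat.rec 0 (fun y IH =>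
      cond (decide (IH < y)) IH (cond (chk R n y s) y (y + 1))) s : ℕ) = stage R n s
  show _ = searchUpTo (fun a => chk R n a s) s
  have key : ∀ t, (Nat.rec 0 (fun y IH =>
      cond (decide (IH < y)) IH (cond (chk R n y s) y (y + 1))) t : ℕ) =
      searchUpTo (fun a => chk R n a s) t := by
    intro t
    induction t with
    | zero => rfl
    | succ t ih =>
      show cond _ _ _ = _
      rw [ih]
      simp only [searchUpTo]
      by_cases hlt : searchUpTo (fun a => chk R n a s) t < t
      · simp [hlt]
      · have hd : decide (searchUpTo (fun a => chk R n a s) t < t) = false := by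
          simpa using hlt
        rw [hd, cond_false, if_neg hlt, Bool.cond_eq_ite]
  exact key s


/-- The three stage functions bundled with a numeric index. -/
def stage3 (R : Fin 3 → ℕ × ℕ × ℕ → Bool) (n s i : ℕ) : ℕ :=
  if i = 0 then stage (R 0) n s else if i = 1 then stage (R 1) n s else stage (R 2) n s

theorem stage3_eq (R : Fin 3 → ℕ × ℕ × ℕ → Bool) (n s : ℕ) (i : Fin 3) :
    stage3 R n s (i : ℕ) = stage (R i) n s := by
  fin_cases i <;> simp [stage3]

/-- The partial function whose curried codes realize the reduction. -/
def psi (R : Fin 3 → ℕ × ℕ × ℕ → Bool) (m : ℕ) : Part ℕ :=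
  (Nat.rfind fun s =>
    Part.some (decide (m.unpair.2 / 3 ≤ stage3 R m.unpair.1 s (m.unpair.2 % 3)))).map
    fun _ => m.unpair.2 % 3

theorem stage3_computable {R : Fin 3 → ℕ × ℕ × ℕ → Bool} (hR : ∀ i, Computable (R i)) :
    Computable fun x : (ℕ × ℕ) × ℕ => stage3 R x.1.1 x.1.2 x.2 := by
  have hs : ∀ i : Fin 3, Computable fun x : (ℕ × ℕ) × ℕ => stage (R i) x.1.1 x.1.2 := fun i =>
    Computable.comp (f := fun q : ℕ × ℕ => stage (R i) q.1 q.2)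
      (g := fun x : (ℕ × ℕ) × ℕ => (x.1.1, x.1.2)) (stage_computable (hR i))
      (Computable.pair (Computable.fst.comp Computable.fst)
        (Computable.snd.comp Computable.fst))
  have c0 : Computable fun x : (ℕ × ℕ) × ℕ => decide (x.2 = 0) :=
    (Primrec.eq.comp Primrec.snd (Primrec.const 0)).decide.to_comp
  have c1 : Computable fun x : (ℕ × ℕ) × ℕ => decide (x.2 = 1) :=
    (Primrec.eq.comp Primrec.snd (Primrec.const 1)).decide.to_comp
  have : Computable fun x : (ℕ × ℕ) × ℕ =>
      cond (decide (x.2 = 0)) (stage (R 0) x.1.1 x.1.2)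
        (cond (decide (x.2 = 1)) (stage (R 1) x.1.1 x.1.2) (stage (R 2) x.1.1 x.1.2)) :=
    Computable.cond c0 (hs 0) (Computable.cond c1 (hs 1) (hs 2))
  exact this.of_eq fun x => by simp [stage3, Bool.cond_decide]

theorem psi_partrec {R : Fin 3 → ℕ × ℕ × ℕ → Bool} (hR : ∀ i, Computable (R i)) :
    Partrec (psi R) := by
  have hA : Computable fun p : ℕ × ℕ => p.1.unpair.2 / 3 :=
    (Primrec.nat_div.comp ((Primrec.snd.comp Primrec.unpair).comp Primrec.fst)
      (Primrec.const 3)).to_comp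
  have hBarg : Computable fun p : ℕ × ℕ => ((p.1.unpair.1, p.2), p.1.unpair.2 % 3) :=
    Computable.pair
      (Computable.pair ((Primrec.fst.comp (Primrec.unpair.comp Primrec.fst)).to_comp)
        Computable.snd)
      ((Primrec.nat_mod.comp ((Primrec.snd.comp Primrec.unpair).comp Primrec.fst)
        (Primrec.const 3)).to_comp)
  have hB : Computable fun p : ℕ × ℕ => stage3 R p.1.unpair.1 p.2 (p.1.unpair.2 % 3) :=
    Computable.comp (f := fun x : (ℕ × ℕ) × ℕ => stage3 R x.1.1 x.1.2 x.2)
      (g := fun p : ℕ × ℕ => ((p.1.unpair.1, p.2), p.1.unpair.2 % 3))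
      (stage3_computable hR) hBarg
  have hle : Computable fun ab : ℕ × ℕ => decide (ab.1 ≤ ab.2) :=
    (Primrec.nat_le.comp Primrec.fst Primrec.snd).decide.to_comp
  have hpred : Computable₂ fun m s : ℕ =>
      decide (m.unpair.2 / 3 ≤ stage3 R m.unpair.1 s (m.unpair.2 % 3)) :=
    Computable.comp (f := fun ab : ℕ × ℕ => decide (ab.1 ≤ ab.2))
      (g := fun p : ℕ × ℕ =>
        (p.1.unpair.2 / 3, stage3 R p.1.unpair.1 p.2 (p.1.unpair.2 % 3)))
      hle (hA.pair hB)
  have hpred' : Partrec₂ fun m s : ℕ =>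
      (Part.some (decide (m.unpair.2 / 3 ≤ stage3 R m.unpair.1 s (m.unpair.2 % 3))) :
        Part Bool) := hpred.partrec₂
  exact Partrec.map (Partrec.rfind hpred')
    (((Primrec.nat_mod.comp ((Primrec.snd.comp Primrec.unpair).comp Primrec.fst)
      (Primrec.const 3)).to_comp).to₂)

theorem mem_psi (R : Fin 3 → ℕ × ℕ × ℕ → Bool) (n x k : ℕ) :
    k ∈ psi R (Nat.pair n x) ↔ k = x % 3 ∧ ∃ s, x / 3 ≤ stage3 R n s (x % 3) := by
  constructor
  · intro h
    obtain ⟨a, ha, hk⟩ := (Part.mem_map_iff _).1 h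
    have hspec := Nat.rfind_spec ha
    rw [Part.mem_some_iff] at hspec
    simp only [Nat.unpair_pair] at hspec hk
    exact ⟨hk.symm, a, of_decide_eq_true hspec.symm⟩
  · rintro ⟨rfl, s, hs⟩
    have hdom : (Nat.rfind fun s' =>
        Part.some (decide ((Nat.pair n x).unpair.2 / 3 ≤
          stage3 R (Nat.pair n x).unpair.1 s' ((Nat.pair n x).unpair.2 % 3)))).Dom := by
      refine Nat.rfind_dom.2 ?_
      refine ⟨s, ?_, fun _ => trivial⟩
      rw [Part.mem_some_iff]
      simp only [Nat.unpair_pair]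
      exact (decide_eq_true hs).symm
    exact (Part.mem_map_iff _).2 ⟨_, Part.get_mem hdom, by simp only [Nat.unpair_pair]⟩


theorem reduction (X : Fin 3 → Set ℕ) (hX : ∀ i : Fin 3, Sigma02 (X i)) :
    TupleMRed X (fun j : Fin 3 => Eset (j : ℕ)) := by
  choose R hRc hRX using hX
  obtain ⟨c, hc⟩ := Nat.Partrec.Code.exists_code.1 (Partrec.nat_iff.1 (psi_partrec hRc))
  obtain ⟨F, hF, hFeval⟩ := Nat.Partrec.Code.smn
  refine ⟨fun n => Encodable.encode (F c n),
    Computable.encode.comp (hF.comp (Computable.const c) Computable.id), ?_⟩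
  intro i n
  have hphi : ∀ x k : ℕ, k ∈ phi (Encodable.encode (F c n)) x ↔
      (k = x % 3 ∧ ∃ s, x / 3 ≤ stage3 R n s (x % 3)) := by
    intro x k
    have heq : phi (Encodable.encode (F c n)) x = psi R (Nat.pair n x) := by
      show Nat.Partrec.Code.eval
        (Denumerable.ofNat Nat.Partrec.Code (Encodable.encode (F c n))) x = _
      rw [Denumerable.ofNat_encode, hFeval, hc]
    rw [heq]
    exact mem_psi R n x k
  set P : Fin 3 → Set ℕ := fun i' =>
    {x : ℕ | x % 3 = (i' : ℕ) ∧ ∃ s, x / 3 ≤ stage (R i') n s} with hP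
  have key : ∀ i' : Fin 3, n ∈ X i' ↔ (P i').Finite := by
    intro i'
    rw [hRX i']
    constructor
    · rintro ⟨a₀, ha₀⟩
      apply Set.Finite.subset (Set.finite_Iic (3 * a₀ + 2))
      rintro x ⟨hx1, s, hx2⟩
      have h1 := stage_le_of (R i') ha₀ s
      have h2 : x % 3 + 3 * (x / 3) = x := Nat.mod_add_div x 3
      have h3 : (i' : ℕ) < 3 := i'.isLt
      simp only [Set.mem_Iic]
      omega
    · intro hfin
      by_contra hn
      rw [Set.mem_setOf_eq] at hn
      push_neg at hn
      simp only [Bool.not_eq_true] at hn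
      refine Set.infinite_of_injective_forall_mem
        (f := fun t : ℕ => 3 * t + (i' : ℕ))
        (fun a b hab => by
          have hab' : 3 * a + (i' : ℕ) = 3 * b + (i' : ℕ) := hab
          omega)
        (fun t => ?_) hfin
      have h3 : (i' : ℕ) < 3 := i'.isLt
      show (3 * t + (i' : ℕ)) % 3 = (i' : ℕ) ∧ ∃ s, (3 * t + (i' : ℕ)) / 3 ≤ stage (R i') n s
      refine ⟨by omega, ?_⟩
      obtain ⟨s, hs⟩ := stage_unbounded (R i') hn t
      have hdiv : (3 * t + (i' : ℕ)) / 3 = t := by omega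
      rw [hdiv]
      exact ⟨s, hs.le⟩
  have hrange : ∀ x k : ℕ, k ∈ phi (Encodable.encode (F c n)) x → k ∈ ({0, 1, 2} : Set ℕ) := by
    intro x k hk
    have h1 := ((hphi x k).1 hk).1
    have h3 : x % 3 < 3 := Nat.mod_lt _ (by norm_num)
    simp only [Set.mem_insert_iff, Set.mem_singleton_iff]
    omega
  have hWiff : (Wset (Encodable.encode (F c n))).Finite ↔ ∀ i' : Fin 3, (P i').Finite := by
    constructor
    · intro hfin i'
      apply hfin.subset
      rintro x ⟨hx1, s, hx2⟩
      exact Part.dom_iff_mem.2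
        ⟨x % 3, (hphi x (x % 3)).2 ⟨rfl, s, by rw [hx1, stage3_eq]; exact hx2⟩⟩
    · intro hall
      apply (Set.finite_iUnion hall).subset
      intro x hx
      obtain ⟨k, hk⟩ := Part.dom_iff_mem.1 hx
      obtain ⟨hk1, s, hk2⟩ := (hphi x k).1 hk
      have h3 : x % 3 < 3 := Nat.mod_lt _ (by norm_num)
      refine Set.mem_iUnion.2 ⟨⟨x % 3, h3⟩, rfl, s, ?_⟩
      exact hk2.trans_eq (stage3_eq R n s ⟨x % 3, h3⟩)
  have hPre : {k : ℕ | (i : ℕ) ∈ phi (Encodable.encode (F c n)) k} = P i := by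
    ext x
    rw [Set.mem_setOf_eq, hphi]
    constructor
    · rintro ⟨h1, s, h2⟩
      rw [← h1, stage3_eq] at h2
      exact ⟨h1.symm, s, h2⟩
    · rintro ⟨h1, s, h2⟩
      exact ⟨h1.symm, s, by rw [h1, stage3_eq]; exact h2⟩
  rw [key i]
  constructor
  · intro hPf
    exact ⟨hrange, Or.inr (by rw [hPre]; exact hPf)⟩
  · rintro ⟨-, hfin | hfin⟩
    · exact (hWiff.1 hfin) i
    · rwa [hPre] at hfin

end EsetProof

/-- `(E₀, E₁, E₂)` is m-complete in the class of 3-tuples of `Σ⁰₂` subsets of `ℕ`. -/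
theorem Eset_mComplete :
    (∀ j : Fin 3, Sigma02 (Eset (j : ℕ))) ∧
    ∀ X : Fin 3 → Set ℕ, (∀ i : Fin 3, Sigma02 (X i)) →
      TupleMRed X (fun j : Fin 3 => Eset (j : ℕ)) :=
  ⟨fun j => ⟨EsetProof.Erel (j : ℕ), EsetProof.Erel_computable (j : ℕ), EsetProof.Eset_eq (j : ℕ)⟩,
    EsetProof.reduction⟩
end

section
/- Let (Z₀, Z₁, Z₂) be a 3-tuple of Σ⁰₂ subsets of ℕ with Z₀ ⊆ Z₁ ⊆ Z₂ that is m-complete in the class of 3-tuples (X₀, X₁, X₂) of Σ⁰₂ subsets of ℕ satisfying X₀ ⊆ X₁ ⊆ X₂. Then the set Z₀ ∪ (Z₂ \ Z₁) is not Σ⁰₂. -/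
lemma sigma02_empty : Sigma02 (∅ : Set ℕ) :=
  ⟨fun _ => false, Computable.const false, by ext n; simp⟩

open Nat.Partrec.Code in
lemma sigma02_diagdom : Sigma02 {e : ℕ | (phi e e).Dom} := by
  refine ⟨fun x => (evaln x.2.1 (Denumerable.ofNat Nat.Partrec.Code x.1) x.1).isSome, ?_, ?_⟩
  · exact (Primrec.option_isSome.comp (primrec_evaln.comp
      (((Primrec.fst.comp Primrec.snd).pair ((Primrec.ofNat _).comp Primrec.fst)).pair
        Primrec.fst))).to_comp
  · ext e
    simp only [Set.mem_setOf_eq]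
    constructor
    · intro h
      obtain ⟨x, hx⟩ := Part.dom_iff_mem.1 h
      obtain ⟨k, hk⟩ := evaln_complete.1 hx
      exact ⟨k, fun _ => Option.isSome_iff_exists.2 ⟨x, hk⟩⟩
    · rintro ⟨a, h⟩
      obtain ⟨x, hx⟩ := Option.isSome_iff_exists.1 (h 0)
      exact Part.dom_iff_mem.2 ⟨x, evaln_sound (Option.mem_def.2 hx)⟩

open Nat.Partrec.Code in
lemma sigma02_diagS {S : Set ℕ} (hS : Sigma02 S) :
    Sigma02 {e : ℕ | ∃ v, v ∈ phi e e ∧ v ∈ S} := by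
  obtain ⟨RS, hRS, hSeq⟩ := hS
  refine ⟨fun x => ((evaln x.2.1.unpair.1 (Denumerable.ofNat Nat.Partrec.Code x.1) x.1).map
      (fun v => RS (v, x.2.1.unpair.2, x.2.2))).getD false, ?_, ?_⟩
  · apply Computable.option_getD _ (Computable.const false)
    apply Computable.option_map
    · exact (primrec_evaln.comp
        ((((Primrec.fst.comp Primrec.unpair).comp (Primrec.fst.comp Primrec.snd)).pair
          ((Primrec.ofNat _).comp Primrec.fst)).pair Primrec.fst)).to_comp
    · exact hRS.comp ((Computable.snd).pair
        ((((Primrec.snd.comp Primrec.unpair).comp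
            (Primrec.fst.comp (Primrec.snd.comp Primrec.fst))).to_comp).pair
          (Primrec.snd.comp (Primrec.snd.comp Primrec.fst)).to_comp))
  · ext e
    simp only [Set.mem_setOf_eq]
    constructor
    · rintro ⟨v, hv, hvS⟩
      obtain ⟨k, hk⟩ := evaln_complete.1 hv
      rw [hSeq] at hvS
      obtain ⟨a, ha⟩ := hvS
      refine ⟨Nat.pair k a, fun b => ?_⟩
      simp only [Nat.unpair_pair]
      rw [Option.mem_def.1 hk]
      exact ha b
    · rintro ⟨p, hp⟩
      rcases ho : evaln p.unpair.1 (Denumerable.ofNat Nat.Partrec.Code e) e with _ | v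
      · have := hp 0
        rw [ho] at this
        simp at this
      · refine ⟨v, evaln_sound (Option.mem_def.2 ho), ?_⟩
        rw [hSeq]
        refine ⟨p.unpair.2, fun b => ?_⟩
        have := hp b
        rw [ho] at this
        simpa using this

/-- If `(Z₀, Z₁, Z₂)` is a nested 3-tuple of `Σ⁰₂` sets that is m-complete in the class
of nested 3-tuples of `Σ⁰₂` sets, then `Z₀ ∪ (Z₂ \ Z₁)` is not `Σ⁰₂`. -/
theorem not_sigma02_of_nested_mComplete (Z : Fin 3 → Set ℕ)
    (hZ : ∀ i : Fin 3, Sigma02 (Z i)) (h01 : Z 0 ⊆ Z 1) (h12 : Z 1 ⊆ Z 2)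
    (hcomp : ∀ X : Fin 3 → Set ℕ, (∀ i : Fin 3, Sigma02 (X i)) → X 0 ⊆ X 1 → X 1 ⊆ X 2 →
      TupleMRed X Z) :
    ¬ Sigma02 (Z 0 ∪ (Z 2 \ Z 1)) := by
  intro hS
  set S : Set ℕ := Z 0 ∪ (Z 2 \ Z 1) with hSdef
  set X : Fin 3 → Set ℕ :=
    ![∅, {e | ∃ v, v ∈ phi e e ∧ v ∈ S}, {e | (phi e e).Dom}] with hX
  have hX0 : X 0 = ∅ := rfl
  have hX1 : X 1 = {e | ∃ v, v ∈ phi e e ∧ v ∈ S} := rfl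
  have hX2 : X 2 = {e | (phi e e).Dom} := rfl
  have hXs : ∀ i : Fin 3, Sigma02 (X i) := by
    intro i
    fin_cases i
    · exact sigma02_empty
    · exact sigma02_diagS hS
    · exact sigma02_diagdom
  have hsub01 : X 0 ⊆ X 1 := by rw [hX0]; exact Set.empty_subset _
  have hsub12 : X 1 ⊆ X 2 := by
    rw [hX1, hX2]
    rintro e ⟨v, hv, -⟩
    exact Part.dom_iff_mem.2 ⟨v, hv⟩
  obtain ⟨h, hcomp_h, hred⟩ := hcomp X hXs hsub01 hsub12
  obtain ⟨c, hc⟩ := Nat.Partrec.Code.exists_code.1 (Partrec.nat_iff.1 hcomp_h.partrec)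
  set e : ℕ := Encodable.encode c with he
  have hphi : phi e = fun n => Part.some (h n) := by
    rw [phi, he, Denumerable.ofNat_encode, hc]
    rfl
  set m : ℕ := h e with hm
  have hm2 : m ∈ Z 2 := by
    refine (hred 2 e).1 ?_
    rw [hX2]
    show (phi e e).Dom
    rw [hphi]
    trivial
  have hm0 : m ∉ Z 0 := by
    intro hmem
    have : e ∈ X 0 := (hred 0 e).2 hmem
    rw [hX0] at this
    exact this
  have key : e ∈ X 1 ↔ m ∈ Z 1 := hred 1 e
  have hmem1 : e ∈ X 1 ↔ m ∈ S := by
    rw [hX1]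
    constructor
    · rintro ⟨v, hv, hvS⟩
      have : v = m := by
        rw [hphi] at hv
        exact Part.mem_some_iff.1 hv
      rwa [this] at hvS
    · intro hmS
      exact ⟨m, by rw [hphi]; exact Part.mem_some m, hmS⟩
  have hSm : m ∈ S ↔ m ∉ Z 1 := by
    constructor
    · rintro (h0 | ⟨-, h1⟩)
      · exact absurd h0 hm0
      · exact h1
    · intro h1
      exact Or.inr ⟨hm2, h1⟩
  rw [hmem1, hSm] at key
  exact (not_iff_self key).elim
end

section
/- Let F be a field and μ : ℕ → F a surjection such that there are total computable functions p, t, ng with μ(p(n,m)) = μ(n) + μ(m), μ(t(n,m)) = μ(n)·μ(m) and μ(ng(n)) = −μ(n) for all n, m, and there is an index e₁ with μ(e₁) = 1. If the set {(n,m) | μ(n) = μ(m)} is computably enumerable, then it is computable (decidable). ("Positive numbered fields are computable.") -/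
/-- Positive numbered fields are computable: if `(F, μ)` is a numbered field (addition,
multiplication and negation are computably realized and `1` has an index) and the
equality relation `{(n,m) | μ(n) = μ(m)}` is computably enumerable, then it is
computable (decidable). -/
theorem positive_numbered_field_computable (F : Type*) [Field F]
    (μ : ℕ → F) (hsurj : Function.Surjective μ)
    (p t : ℕ → ℕ → ℕ) (ng : ℕ → ℕ)
    (hp : Computable₂ p) (ht : Computable₂ t) (hng : Computable ng)
    (hadd : ∀ n m : ℕ, μ (p n m) = μ n + μ m)
    (hmul : ∀ n m : ℕ, μ (t n m) = μ n * μ m)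
    (hneg : ∀ n : ℕ, μ (ng n) = -μ n)
    (e₁ : ℕ) (hone : μ e₁ = 1)
    (hce : ∃ R : (ℕ × ℕ) × ℕ → Bool, Computable R ∧
      ∀ n m : ℕ, (μ n = μ m ↔ ∃ a : ℕ, R ((n, m), a) = true)) :
    ∃ d : ℕ × ℕ → Bool, Computable d ∧ ∀ n m : ℕ, (d (n, m) = true ↔ μ n = μ m) := by
  classical
  obtain ⟨R, hR, hRspec⟩ := hce
  -- Q x c searches for evidence of equality (first disjunct) or inequality (second)
  set Q : ℕ × ℕ → ℕ → Bool := fun x c =>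
    R ((x.1, x.2), c.unpair.1) ||
      R ((t c.unpair.2 (p x.1 (ng x.2)), e₁), c.unpair.1) with hQdef
  have hQ : Computable₂ Q := by
    have h1 : Computable fun (y : (ℕ × ℕ) × ℕ) => y.2.unpair.1 :=
      (Computable.fst.comp (Computable.unpair.comp Computable.snd))
    have h2 : Computable fun (y : (ℕ × ℕ) × ℕ) => y.2.unpair.2 :=
      (Computable.snd.comp (Computable.unpair.comp Computable.snd))
    have hn : Computable fun (y : (ℕ × ℕ) × ℕ) => y.1.1 :=
      Computable.fst.comp Computable.fst
    have hm : Computable fun (y : (ℕ × ℕ) × ℕ) => y.1.2 :=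
      Computable.snd.comp Computable.fst
    have hA : Computable fun (y : (ℕ × ℕ) × ℕ) =>
        R ((y.1.1, y.1.2), y.2.unpair.1) :=
      hR.comp (Computable.pair (Computable.pair hn hm) h1)
    have hB : Computable fun (y : (ℕ × ℕ) × ℕ) =>
        R ((t y.2.unpair.2 (p y.1.1 (ng y.1.2)), e₁), y.2.unpair.1) :=
      hR.comp (Computable.pair
        (Computable.pair (ht.comp h2 (hp.comp hn (hng.comp hm)))
          (Computable.const e₁)) h1)
    exact Primrec.or.to_comp.comp hA hB
  -- total search succeeds
  have hQtot : ∀ x : ℕ × ℕ, ∃ c, Q x c = true := by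
    rintro ⟨n, m⟩
    by_cases h : μ n = μ m
    · obtain ⟨a, ha⟩ := (hRspec n m).1 h
      exact ⟨Nat.pair a 0, by simp [hQdef, ha]⟩
    · obtain ⟨k, hk⟩ := hsurj (μ n - μ m)⁻¹
      have h1 : μ (t k (p n (ng m))) = μ e₁ := by
        rw [hmul, hadd, hneg, hone, hk]
        field_simp [sub_ne_zero.2 h]
        ring
      obtain ⟨a, ha⟩ := (hRspec _ _).1 h1
      exact ⟨Nat.pair a k, by simp [hQdef, ha]⟩
  -- from a witness, the first component decides equality
  have hdec : ∀ (n m c : ℕ), Q (n, m) c = true →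
      (R ((n, m), c.unpair.1) = true ↔ μ n = μ m) := by
    intro n m c hc
    constructor
    · intro h; exact (hRspec n m).2 ⟨_, h⟩
    · intro h
      by_contra hfalse
      simp only [hQdef, Bool.or_eq_true] at hc
      rcases hc with hc | hc
      · exact hfalse hc
      · have h1 : μ (t c.unpair.2 (p n (ng m))) = μ e₁ := (hRspec _ _).2 ⟨_, hc⟩
        rw [hmul, hadd, hneg, hone, h, add_neg_cancel, mul_zero] at h1
        exact zero_ne_one h1
  refine ⟨fun x => decide (μ x.1 = μ x.2), ?_, fun n m => by simp⟩
  -- computability via unbounded search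
  have hg : Partrec fun x : ℕ × ℕ =>
      (Nat.rfind fun c => Part.some (Q x c)).map fun c => R ((x.1, x.2), c.unpair.1) := by
    refine Partrec.map (Partrec.rfind ?_) ?_
    · exact hQ.partrec₂
    · exact (hR.comp (Computable.pair
        (Computable.pair (Computable.fst.comp Computable.fst)
          (Computable.snd.comp Computable.fst))
        (Computable.fst.comp (Computable.unpair.comp Computable.snd)))).to₂
  refine hg.of_eq fun x => ?_
  obtain ⟨n, m⟩ := x
  have hdom : (Nat.rfind fun c => Part.some (Q (n, m) c)).Dom := by
    refine (Nat.rfind_dom' (p := fun c => Part.some (Q (n, m) c))).2 ?_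
    obtain ⟨c, hc⟩ := hQtot (n, m)
    exact ⟨c, by simpa using hc, fun _ => trivial⟩
  set c := (Nat.rfind fun c => Part.some (Q (n, m) c)).get hdom with hcdef
  have hcmem := Part.get_mem hdom
  have hcspec : Q (n, m) c = true := by
    have := Nat.rfind_spec hcmem
    simpa using this
  show _ = Part.some (decide (μ n = μ m))
  rw [Part.eq_some_iff]
  refine Part.mem_map_iff _ |>.2 ⟨c, hcmem, ?_⟩
  by_cases h : μ n = μ m
  · simp [h, (hdec n m c hcspec).2 h]
  · simp only [h, decide_eq_false h]
    cases hR1 : R ((n, m), c.unpair.1) with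
    | false => rfl
    | true => exact absurd ((hdec n m c hcspec).1 hR1) h
end
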